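/- If a propositional formula A is valid (true under every boolean valuation), then A is provable in the classical natural deduction calculus Nc from the empty context. -/

import Mathlib

inductive PropF (V : Type) : Type
  | Var : V → PropF V
  | Bot : PropF V
  | Conj : PropF V → PropF V → PropF V
  | Disj : PropF V → PropF V → PropF V
  | Impl : PropF V → PropF V → PropF V
deriving DecidableEq

variable {V : Type} [DecidableEq V]

def PropF.Neg (A : PropF V) : PropF V := A.Impl .Bot
def PropF.Top : PropF V := PropF.Neg .Bot

def TrueQ (v : V → Bool) : PropF V → Bool
  | .Var p => v p
  | .Bot => false
  | .Conj B C => TrueQ v B && TrueQ v C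
  | .Disj B C => TrueQ v B || TrueQ v C
  | .Impl B C => !(TrueQ v B) || TrueQ v C

def Satisfies (v : V → Bool) (Γ : List (PropF V)) : Prop := ∀ A ∈ Γ, TrueQ v A = true
def Models (Γ : List (PropF V)) (A : PropF V) : Prop := ∀ v, Satisfies v Γ → TrueQ v A = true
def Valid (A : PropF V) : Prop := Models [] A
def Validates (v : V → Bool) (Δ : List (PropF V)) : Prop := ∃ A ∈ Δ, TrueQ v A = true

inductive Nc : List (PropF V) → PropF V → Prop
  | Nax (Γ : List (PropF V)) (A : PropF V) : A ∈ Γ → Nc Γ A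
  | ImpI (Γ : List (PropF V)) (A B : PropF V) : Nc (A :: Γ) B → Nc Γ (A.Impl B)
  | ImpE (Γ : List (PropF V)) (A B : PropF V) : Nc Γ (A.Impl B) → Nc Γ A → Nc Γ B
  | BotC (Γ : List (PropF V)) (A : PropF V) : Nc (A.Neg :: Γ) .Bot → Nc Γ A
  | AndI (Γ : List (PropF V)) (A B : PropF V) : Nc Γ A → Nc Γ B → Nc Γ (A.Conj B)
  | AndE1 (Γ : List (PropF V)) (A B : PropF V) : Nc Γ (A.Conj B) → Nc Γ A
  | AndE2 (Γ : List (PropF V)) (A B : PropF V) : Nc Γ (A.Conj B) → Nc Γ B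
  | OrI1 (Γ : List (PropF V)) (A B : PropF V) : Nc Γ A → Nc Γ (A.Disj B)
  | OrI2 (Γ : List (PropF V)) (A B : PropF V) : Nc Γ B → Nc Γ (A.Disj B)
  | OrE (Γ : List (PropF V)) (A B C : PropF V) : Nc Γ (A.Disj B) → Nc (A :: Γ) C → Nc (B :: Γ) C → Nc Γ C

def Provable (A : PropF V) : Prop := Nc [] A

inductive NNF (V : Type) : Type
  | NPos : V → NNF V
  | NNeg : V → NNF V
  | NBot : NNF V
  | NTop : NNF V
  | NConj : NNF V → NNF V → NNF V
  | NDisj : NNF V → NNF V → NNF V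
deriving DecidableEq

def NNFtoPropF : NNF V → PropF V
  | .NPos p => .Var p
  | .NNeg p => (PropF.Var p).Neg
  | .NBot => .Bot
  | .NTop => PropF.Top
  | .NConj B C => (NNFtoPropF B).Conj (NNFtoPropF C)
  | .NDisj B C => (NNFtoPropF B).Disj (NNFtoPropF C)

mutual
def MakeNNF : PropF V → NNF V
  | .Var p => .NPos p
  | .Bot => .NBot
  | .Disj B C => .NDisj (MakeNNF B) (MakeNNF C)
  | .Conj B C => .NConj (MakeNNF B) (MakeNNF C)
  | .Impl B C => .NDisj (MakeNNFN B) (MakeNNF C)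
def MakeNNFN : PropF V → NNF V
  | .Var p => .NNeg p
  | .Bot => .NTop
  | .Disj B C => .NConj (MakeNNFN B) (MakeNNFN C)
  | .Conj B C => .NDisj (MakeNNFN B) (MakeNNFN C)
  | .Impl B C => .NConj (MakeNNF B) (MakeNNFN C)
end

inductive Lit (V : Type) : Type
  | LPos : V → Lit V
  | LNeg : V → Lit V
  | LBot : Lit V
  | LTop : Lit V
deriving DecidableEq

def LiteraltoPropF : Lit V → PropF V
  | .LPos p => .Var p
  | .LNeg p => (PropF.Var p).Neg
  | .LBot => .Bot
  | .LTop => PropF.Top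

abbrev Clause (V : Type) : Type := List (Lit V)
abbrev CNF (V : Type) : Type := List (Clause V)

abbrev ClausetoPropF (l : Clause V) : PropF V :=
  l.foldr (fun a r => (LiteraltoPropF a).Disj r) .Bot

def CNFtoPropF (ll : CNF V) : PropF V :=
  ll.foldr (fun c r => (ClausetoPropF c).Conj r) PropF.Top

def AddClause (l : Clause V) (ll : CNF V) : CNF V := ll.map (fun l2 => l ++ l2)
def Disjunct (ll ll2 : CNF V) : CNF V := ll.flatMap (fun l => AddClause l ll2)

def MakeCNF : NNF V → CNF V
  | .NPos p => [[.LPos p]]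
  | .NNeg p => [[.LNeg p]]
  | .NBot => [[.LBot]]
  | .NTop => [[.LTop]]
  | .NConj B C => MakeCNF B ++ MakeCNF C
  | .NDisj B C => Disjunct (MakeCNF B) (MakeCNF C)

def Valid_Clause (l : Clause V) : Prop :=
  Lit.LTop ∈ l ∨ ∃ p, Lit.LPos p ∈ l ∧ Lit.LNeg p ∈ l
def Valid_CNF (ll : CNF V) : Prop := ∀ l ∈ ll, Valid_Clause l

inductive AxiomH : PropF V → Prop
  | HOrI1 (A B : PropF V) : AxiomH (A.Impl (A.Disj B))
  | HOrI2 (A B : PropF V) : AxiomH (B.Impl (A.Disj B))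
  | HAndI (A B : PropF V) : AxiomH (A.Impl (B.Impl (A.Conj B)))
  | HOrE (A B C : PropF V) : AxiomH ((A.Disj B).Impl ((A.Impl C).Impl ((B.Impl C).Impl C)))
  | HAndE1 (A B : PropF V) : AxiomH ((A.Conj B).Impl A)
  | HAndE2 (A B : PropF V) : AxiomH ((A.Conj B).Impl B)
  | HS (A B C : PropF V) : AxiomH ((A.Impl (B.Impl C)).Impl ((A.Impl B).Impl (A.Impl C)))
  | HK (A B : PropF V) : AxiomH (A.Impl (B.Impl A))
  | HClas (A : PropF V) : AxiomH ((A.Neg.Neg).Impl A)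

inductive Hc : List (PropF V) → PropF V → Prop
  | Hass (A : PropF V) (Γ : List (PropF V)) : A ∈ Γ → Hc Γ A
  | Hax (A : PropF V) (Γ : List (PropF V)) : AxiomH A → Hc Γ A
  | HImpE (Γ : List (PropF V)) (A B : PropF V) : Hc Γ (A.Impl B) → Hc Γ A → Hc Γ B

inductive G : List (PropF V) → List (PropF V) → Prop
  | Gax (A : PropF V) (Γ Δ : List (PropF V)) : A ∈ Γ → A ∈ Δ → G Γ Δ
  | GBot (Γ Δ : List (PropF V)) : PropF.Bot ∈ Γ → G Γ Δ
  | AndL (A B : PropF V) (Γ1 Γ2 Δ : List (PropF V)) : G (Γ1 ++ A :: B :: Γ2) Δ → G (Γ1 ++ (A.Conj B) :: Γ2) Δ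
  | AndR (A B : PropF V) (Γ Δ1 Δ2 : List (PropF V)) : G Γ (Δ1 ++ A :: Δ2) → G Γ (Δ1 ++ B :: Δ2) → G Γ (Δ1 ++ (A.Conj B) :: Δ2)
  | OrL (A B : PropF V) (Γ1 Γ2 Δ : List (PropF V)) : G (Γ1 ++ A :: Γ2) Δ → G (Γ1 ++ B :: Γ2) Δ → G (Γ1 ++ (A.Disj B) :: Γ2) Δ
  | OrR (A B : PropF V) (Γ Δ1 Δ2 : List (PropF V)) : G Γ (Δ1 ++ A :: B :: Δ2) → G Γ (Δ1 ++ (A.Disj B) :: Δ2)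
  | ImpL (A B : PropF V) (Γ1 Γ2 Δ : List (PropF V)) : G (Γ1 ++ B :: Γ2) Δ → G (Γ1 ++ Γ2) (A :: Δ) → G (Γ1 ++ (A.Impl B) :: Γ2) Δ
  | ImpR (A B : PropF V) (Γ Δ1 Δ2 : List (PropF V)) : G (A :: Γ) (Δ1 ++ B :: Δ2) → G Γ (Δ1 ++ (A.Impl B) :: Δ2)
  | Cut (A : PropF V) (Γ Δ : List (PropF V)) : G Γ (A :: Δ) → G (A :: Γ) Δ → G Γ Δ

inductive Gcf : List (PropF V) → List (PropF V) → Prop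
  | Gax (p : V) (Γ Δ : List (PropF V)) : PropF.Var p ∈ Γ → PropF.Var p ∈ Δ → Gcf Γ Δ
  | GBot (Γ Δ : List (PropF V)) : PropF.Bot ∈ Γ → Gcf Γ Δ
  | AndL (A B : PropF V) (Γ1 Γ2 Δ : List (PropF V)) : Gcf (Γ1 ++ A :: B :: Γ2) Δ → Gcf (Γ1 ++ (A.Conj B) :: Γ2) Δ
  | AndR (A B : PropF V) (Γ Δ1 Δ2 : List (PropF V)) : Gcf Γ (Δ1 ++ A :: Δ2) → Gcf Γ (Δ1 ++ B :: Δ2) → Gcf Γ (Δ1 ++ (A.Conj B) :: Δ2)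
  | OrL (A B : PropF V) (Γ1 Γ2 Δ : List (PropF V)) : Gcf (Γ1 ++ A :: Γ2) Δ → Gcf (Γ1 ++ B :: Γ2) Δ → Gcf (Γ1 ++ (A.Disj B) :: Γ2) Δ
  | OrR (A B : PropF V) (Γ Δ1 Δ2 : List (PropF V)) : Gcf Γ (Δ1 ++ A :: B :: Δ2) → Gcf Γ (Δ1 ++ (A.Disj B) :: Δ2)
  | ImpL (A B : PropF V) (Γ1 Γ2 Δ : List (PropF V)) : Gcf (Γ1 ++ B :: Γ2) Δ → Gcf (Γ1 ++ Γ2) (A :: Δ) → Gcf (Γ1 ++ (A.Impl B) :: Γ2) Δ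
  | ImpR (A B : PropF V) (Γ Δ1 Δ2 : List (PropF V)) : Gcf (A :: Γ) (Δ1 ++ B :: Δ2) → Gcf Γ (Δ1 ++ (A.Impl B) :: Δ2)

def BigOr (Δ : List (PropF V)) : PropF V := Δ.foldr PropF.Disj .Bot

def size : PropF V → Nat
  | .Var _ => 0
  | .Bot => 0
  | .Conj B C => (size B + size C).succ
  | .Disj B C => (size B + size C).succ
  | .Impl B C => (size B + size C).succ

def sizel (Γ : List (PropF V)) : Nat := (Γ.map size).sum
def sizes (Γ Δ : List (PropF V)) : Nat := sizel Γ + sizel Δ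

section Completeness

theorem Nc.weaken {Γ Δ : List (PropF V)} {A : PropF V} (h : Nc Γ A)
    (hs : ∀ B ∈ Γ, B ∈ Δ) : Nc Δ A := by
  have hs' : Γ ⊆ Δ := hs
  clear hs
  induction h generalizing Δ with
  | Nax Γ A hmem => exact .Nax _ _ (hs' hmem)
  | ImpI Γ A B _ ih => exact .ImpI _ _ _ (ih (List.cons_subset_cons _ hs'))
  | ImpE Γ A B _ _ ih1 ih2 => exact .ImpE _ _ _ (ih1 hs') (ih2 hs')
  | BotC Γ A _ ih => exact .BotC _ _ (ih (List.cons_subset_cons _ hs'))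
  | AndI Γ A B _ _ ih1 ih2 => exact .AndI _ _ _ (ih1 hs') (ih2 hs')
  | AndE1 Γ A B _ ih => exact .AndE1 _ _ _ (ih hs')
  | AndE2 Γ A B _ ih => exact .AndE2 _ _ _ (ih hs')
  | OrI1 Γ A B _ ih => exact .OrI1 _ _ _ (ih hs')
  | OrI2 Γ A B _ ih => exact .OrI2 _ _ _ (ih hs')
  | OrE Γ A B C _ _ _ ih1 ih2 ih3 =>
      exact .OrE _ _ _ _ (ih1 hs') (ih2 (List.cons_subset_cons _ hs'))
        (ih3 (List.cons_subset_cons _ hs'))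

theorem Nc.botE {Γ : List (PropF V)} (A : PropF V) (h : Nc Γ .Bot) : Nc Γ A :=
  .BotC _ _ (h.weaken (fun _ hb => List.mem_cons_of_mem _ hb))

theorem Nc.lem (Γ : List (PropF V)) (A : PropF V) : Nc Γ (A.Disj A.Neg) := by
  apply Nc.BotC
  refine .ImpE _ (A.Disj A.Neg) _ (.Nax _ _ (.head _)) ?_
  apply Nc.OrI2
  apply Nc.ImpI
  refine .ImpE _ (A.Disj A.Neg) _ (.Nax _ _ (List.mem_cons_of_mem _ (.head _))) ?_
  exact .OrI1 _ _ _ (.Nax _ _ (.head _))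

def lit (v : V → Bool) (p : V) : PropF V := if v p then .Var p else (PropF.Var p).Neg

def vars : PropF V → List V
  | .Var p => [p]
  | .Bot => []
  | .Conj B C => vars B ++ vars C
  | .Disj B C => vars B ++ vars C
  | .Impl B C => vars B ++ vars C

theorem kalmar (v : V → Bool) (A : PropF V) :
    ∀ Γ : List (PropF V), (∀ p ∈ vars A, lit v p ∈ Γ) →
      Nc Γ (if TrueQ v A then A else A.Neg) := by
  induction A with
  | Var p =>
      intro Γ hΓ
      have h := hΓ p (by simp [vars])
      unfold lit at h
      by_cases hv : v p <;> simp [TrueQ, hv] at h ⊢ <;> exact .Nax _ _ h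
  | Bot =>
      intro Γ hΓ
      simp [TrueQ]
      exact .ImpI _ _ _ (.Nax _ _ (.head _))
  | Conj B C ihB ihC =>
      intro Γ hΓ
      have hB := ihB Γ (fun p hp => hΓ p (by simp [vars, hp]))
      have hC := ihC Γ (fun p hp => hΓ p (by simp [vars, hp]))
      by_cases hb : TrueQ v B <;> by_cases hc : TrueQ v C <;>
        simp [TrueQ, hb, hc] at hB hC ⊢
      · exact .AndI _ _ _ hB hC
      · apply Nc.ImpI
        refine .ImpE _ C _ (hC.weaken (fun _ h => List.mem_cons_of_mem _ h)) ?_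
        exact .AndE2 _ B _ (.Nax _ _ (.head _))
      · apply Nc.ImpI
        refine .ImpE _ B _ (hB.weaken (fun _ h => List.mem_cons_of_mem _ h)) ?_
        exact .AndE1 _ _ C (.Nax _ _ (.head _))
      · apply Nc.ImpI
        refine .ImpE _ B _ (hB.weaken (fun _ h => List.mem_cons_of_mem _ h)) ?_
        exact .AndE1 _ _ C (.Nax _ _ (.head _))
  | Disj B C ihB ihC =>
      intro Γ hΓ
      have hB := ihB Γ (fun p hp => hΓ p (by simp [vars, hp]))
      have hC := ihC Γ (fun p hp => hΓ p (by simp [vars, hp]))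
      by_cases hb : TrueQ v B <;> by_cases hc : TrueQ v C <;>
        simp [TrueQ, hb, hc] at hB hC ⊢
      · exact .OrI1 _ _ _ hB
      · exact .OrI1 _ _ _ hB
      · exact .OrI2 _ _ _ hC
      · apply Nc.ImpI
        refine .OrE _ B C _ (.Nax _ _ (.head _)) ?_ ?_
        · refine .ImpE _ B _ (hB.weaken ?_) (.Nax _ _ (.head _))
          intro D hd; exact List.mem_cons_of_mem _ (List.mem_cons_of_mem _ hd)
        · refine .ImpE _ C _ (hC.weaken ?_) (.Nax _ _ (.head _))
          intro D hd; exact List.mem_cons_of_mem _ (List.mem_cons_of_mem _ hd)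
  | Impl B C ihB ihC =>
      intro Γ hΓ
      have hB := ihB Γ (fun p hp => hΓ p (by simp [vars, hp]))
      have hC := ihC Γ (fun p hp => hΓ p (by simp [vars, hp]))
      by_cases hb : TrueQ v B <;> by_cases hc : TrueQ v C <;>
        simp [TrueQ, hb, hc] at hB hC ⊢
      · exact .ImpI _ _ _ (hC.weaken (fun _ h => List.mem_cons_of_mem _ h))
      · -- B true, C false: Neg (B.Impl C)
        apply Nc.ImpI
        refine .ImpE _ C _ (hC.weaken (fun _ h => List.mem_cons_of_mem _ h)) ?_
        refine .ImpE _ B _ (.Nax _ _ (.head _)) (hB.weaken (fun _ h => List.mem_cons_of_mem _ h))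
      · exact .ImpI _ _ _ (hC.weaken (fun _ h => List.mem_cons_of_mem _ h))
      · -- B false: B.Impl C via absurd
        apply Nc.ImpI
        apply Nc.botE
        refine .ImpE _ B _ (hB.weaken (fun _ h => List.mem_cons_of_mem _ h)) (.Nax _ _ (.head _))

theorem elim_vars (A : PropF V) :
    ∀ L : List V, L.Nodup → ∀ Γ : List (PropF V),
      (∀ v, Nc (L.map (lit v) ++ Γ) A) → Nc Γ A := by
  intro L
  induction L with
  | nil => intro _ Γ h; simpa using h (fun _ => false)
  | cons p L ih =>
      intro hnd Γ h
      refine ih hnd.of_cons Γ ?_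
      intro v
      refine .OrE _ (PropF.Var p) (PropF.Var p).Neg _ (Nc.lem _ _) ?_ ?_
      · -- assume Var p; use v' with p ↦ true
        have h' := h (fun q => if q = p then true else v q)
        have hmap : L.map (lit (fun q => if q = p then true else v q)) = L.map (lit v) := by
          apply List.map_congr_left
          intro q hq
          have : q ≠ p := fun e => (List.nodup_cons.mp hnd).1 (e ▸ hq)
          simp [lit, this]
        simp only [List.map_cons, hmap] at h'
        have hl : lit (fun q => if q = p then true else v q) p = PropF.Var p := by
          simp [lit]
        rw [hl] at h'
        exact h'
      · have h' := h (fun q => if q = p then false else v q)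
        have hmap : L.map (lit (fun q => if q = p then false else v q)) = L.map (lit v) := by
          apply List.map_congr_left
          intro q hq
          have : q ≠ p := fun e => (List.nodup_cons.mp hnd).1 (e ▸ hq)
          simp [lit, this]
        simp only [List.map_cons, hmap] at h'
        have hl : lit (fun q => if q = p then false else v q) p = (PropF.Var p).Neg := by
          simp [lit]
        rw [hl] at h'
        exact h'

end Completeness

theorem stmt1' {V : Type} [DecidableEq V] (A : PropF V) (h : Valid A) : Provable A := by
  refine elim_vars A (vars A).dedup (List.nodup_dedup _) [] ?_
  intro v
  have hv : TrueQ v A = true := h v (by intro B hB; simp at hB)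
  have := kalmar v A ((vars A).dedup.map (lit v) ++ [])
    (fun p hp => by
      simp only [List.append_nil]
      exact List.mem_map_of_mem (List.mem_dedup.mpr hp))
  rw [hv] at this
  simpa using this

theorem stmt1 {V : Type} [DecidableEq V] (A : PropF V) (h : Valid A) : Provable A := stmt1' A h
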